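/- There is an M_0 > 0 such that for every real M ≥ M_0 the following holds. Let {X_i}_{i≥1} be i.i.d. positive-integer-valued random variables, W_n = X_1 + ... + X_n, and let {Y_i}_{i≥1} be an independent copy of {X_i}. For a finite vector v of positive integers let S(v) be the sum of its coordinates, l(v) its length, and v' the vector obtained by deleting its last coordinate. Fix a positive integer n and a nonnegative integer b ≤ n/M, let T_{n-b} = max{i : W_i ≤ n-b}, L_n = {max(X_1,...,X_n) ≤ n/M}, and let K be any set of pairs (v_1, v_2) of finite vectors of positive integers satisfying n/3 ≤ S(v_1) ≤ 4n/9, S(v_1') < n/3, n/3 ≤ S(v_2) ≤ 4n/9, and S(v_2') < n/3. Then P( ⋃_{(v_1,v_2)∈K} { (X_1,...,X_{l(v_1)}) = v_1 and (X_{T_{n-b} - l(v_2) + 1},...,X_{T_{n-b}}) = v_2 } ∩ L_n ) ≤ Σ_{(v_1,v_2)∈K} P( (X_1,...,X_{l(v_1)}) = v_1 ) · P( (Y_1,...,Y_{l(v_2)}) = v_2 ). -/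

import Mathlib

open MeasureTheory ProbabilityTheory
open scoped ENNReal

lemma meas_of_ctble {α : Type*} [Countable α] [MeasurableSpace α]
    [MeasurableSingletonClass α] (s : Set α) : MeasurableSet s :=
  (Set.to_countable s).measurableSet

lemma blocks_indep {Ω : Type} [MeasurableSpace Ω] {μ : Measure Ω}
    {f : ℕ ⊕ ℕ → Ω → ℕ} (hf : ∀ i, Measurable (f i))
    (hindep : iIndepFun f μ)
    (S T : Finset (ℕ ⊕ ℕ)) (hST : Disjoint S T)
    {E F : Set Ω}
    (hE : ∀ ω ω', (∀ i ∈ S, f i ω = f i ω') → ω ∈ E → ω' ∈ E)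
    (hF : ∀ ω ω', (∀ i ∈ T, f i ω = f i ω') → ω ∈ F → ω' ∈ F) :
    μ (E ∩ F) = μ E * μ F := by
  have h := hindep.indepFun_finset S T hST hf
  have hEeq : E = (fun ω (i : S) => f i ω) ⁻¹' ((fun ω (i : S) => f i ω) '' E) := by
    ext ω
    constructor
    · exact fun hω => ⟨ω, hω, rfl⟩
    · rintro ⟨ω₀, h₀, hh⟩
      exact hE ω₀ ω (fun i hi => congrFun hh ⟨i, hi⟩) h₀
  have hFeq : F = (fun ω (i : T) => f i ω) ⁻¹' ((fun ω (i : T) => f i ω) '' F) := by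
    ext ω
    constructor
    · exact fun hω => ⟨ω, hω, rfl⟩
    · rintro ⟨ω₀, h₀, hh⟩
      exact hF ω₀ ω (fun i hi => congrFun hh ⟨i, hi⟩) h₀
  rw [hEeq, hFeq]
  exact h.measure_inter_preimage_eq_mul _ _ (meas_of_ctble _) (meas_of_ctble _)

lemma iprod_prob {Ω : Type} [MeasurableSpace Ω] {μ : Measure Ω}
    {f : ℕ ⊕ ℕ → Ω → ℕ}
    (hindep : iIndepFun f μ)
    (l : ℕ) (idx : Fin l → ℕ ⊕ ℕ) (hinj : Function.Injective idx) (g : Fin l → ℕ) :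
    μ {ω | ∀ j : Fin l, f (idx j) ω = g j} = ∏ j : Fin l, μ (f (idx j) ⁻¹' {g j}) := by
  classical
  set sets : (ℕ ⊕ ℕ) → Set ℕ := fun i => {x | ∀ j : Fin l, idx j = i → x = g j} with hsets
  have h1 : {ω | ∀ j : Fin l, f (idx j) ω = g j}
      = ⋂ i ∈ Finset.image idx Finset.univ, f i ⁻¹' sets i := by
    ext ω
    simp only [Set.mem_setOf_eq, Set.mem_iInter, Finset.mem_image, Set.mem_preimage, hsets,
      Finset.mem_univ, true_and]
    constructor
    · rintro h i ⟨j, rfl⟩ j' hj'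
      rw [← hj']; exact h j'
    · intro h j
      exact h (idx j) ⟨j, rfl⟩ j rfl
  have h2 := hindep.measure_inter_preimage_eq_mul (S := Finset.image idx Finset.univ)
      (sets := sets) (fun i _ => meas_of_ctble _)
  rw [h1, h2, Finset.prod_image (fun j _ j' _ h => hinj h)]
  refine Finset.prod_congr rfl (fun j _ => ?_)
  have : sets (idx j) = {g j} := by
    ext x
    simp only [hsets, Set.mem_setOf_eq, Set.mem_singleton_iff]
    constructor
    · intro h; exact h j rfl
    · intro h j' hj'; rw [h]; rw [hinj hj']
  rw [this]

lemma sum_Ioc_shift (g : ℕ → ℕ) (r : ℕ) :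
    ∀ m, ∑ i ∈ Finset.Ioc r (r + m), g i = ∑ j ∈ Finset.range m, g (r + 1 + j) := by
  intro m
  induction m with
  | zero => simp
  | succ m ih =>
    rw [show r + (m + 1) = (r + m) + 1 from rfl,
      Finset.sum_Ioc_succ_top (Nat.le_add_right r m), ih, Finset.sum_range_succ]
    congr 2
    omega

lemma list_sum_getD (v : List ℕ) : ∑ j ∈ Finset.range v.length, v.getD j 0 = v.sum := by
  induction v with
  | nil => simp
  | cons a t ih =>
    rw [List.length_cons, Finset.sum_range_succ']
    simp only [List.getD_cons_succ, List.getD_cons_zero, List.sum_cons, ih]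
    omega


section KEY

variable {Ω : Type} [MeasurableSpace Ω] {μ : Measure Ω}
  {X Y : ℕ → Ω → ℕ} {W : ℕ → Ω → ℕ}

lemma key [IsProbabilityMeasure μ]
    (hX : ∀ i, Measurable (X i)) (hY : ∀ i, Measurable (Y i))
    (hXpos : ∀ i ω, 0 < X i ω)
    (hindep : iIndepFun (Sum.elim X Y) μ)
    (hident : ∀ s : ℕ ⊕ ℕ, IdentDistrib (Sum.elim X Y s) (X 1) μ μ)
    (hW : ∀ m ω, W m ω = ∑ i ∈ Finset.Icc 1 m, X i ω)
    (n : ℕ) (hn : 1 ≤ n) (b : ℕ) (M : ℝ) (hM : 100 ≤ M) (hb : (b : ℝ) ≤ (n : ℝ) / M)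
    (T : Ω → ℕ)
    (hT : ∀ ω, W (T ω) ω ≤ n - b ∧ ∀ i, W i ω ≤ n - b → i ≤ T ω)
    (v1 v2 : List ℕ)
    (h149 : (v1.sum : ℝ) ≤ 4 * (n : ℝ) / 9)
    (h249 : (v2.sum : ℝ) ≤ 4 * (n : ℝ) / 9) :
    μ ({ω | (∀ j : Fin v1.length, X (j + 1) ω = v1.get j) ∧
          (∀ j : Fin v2.length, X (T ω - v2.length + 1 + j) ω = v2.get j)}
        ∩ {ω | ∀ i ∈ Finset.Icc 1 n, (X i ω : ℝ) ≤ (n : ℝ) / M})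
      ≤ μ {ω | ∀ j : Fin v1.length, X (j + 1) ω = v1.get j}
        * μ {ω | ∀ j : Fin v2.length, Y (j + 1) ω = v2.get j} := by
  classical
  have hf : ∀ i, Measurable (Sum.elim X Y i) := by
    intro i; cases i with
    | inl i => exact hX i
    | inr i => exact hY i
  -- basic facts about M, n, b
  have hMpos : (0 : ℝ) < M := lt_of_lt_of_le (by norm_num) hM
  have hnR : (1 : ℝ) ≤ (n : ℝ) := by exact_mod_cast hn
  have hnpos : (0 : ℝ) < (n : ℝ) := by linarith
  have hbM : (b : ℝ) ≤ (n : ℝ) / 100 :=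
    le_trans hb (div_le_div_of_nonneg_left (le_of_lt hnpos) (by norm_num) hM)
  have hb' : b ≤ n := by
    have : (b : ℝ) ≤ (n : ℝ) := le_trans hbM (by linarith [div_le_self (le_of_lt hnpos) (by norm_num : (1:ℝ) ≤ 100)])
    exact_mod_cast this
  have hnbR : ((n - b : ℕ) : ℝ) = (n : ℝ) - b := by
    rw [Nat.cast_sub hb']
  -- basic facts about W
  have Wmono : ∀ (ω) ⦃m m' : ℕ⦄, m ≤ m' → W m ω ≤ W m' ω := by
    intro ω m m' h
    rw [hW, hW]
    exact Finset.sum_le_sum_of_subset (Finset.Icc_subset_Icc_right h)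
  have Wsucc : ∀ m ω, W (m + 1) ω = W m ω + X (m + 1) ω := by
    intro m ω
    rw [hW, hW, Finset.sum_Icc_succ_top (by omega : 1 ≤ m + 1)]
  have Wioc : ∀ m ω, W m ω = ∑ i ∈ Finset.Ioc 0 m, X i ω := by
    intro m ω
    rw [hW]
    have h : Finset.Icc 1 m = Finset.Ioc 0 m := by ext x; simp; omega
    rw [h]
  have Wge : ∀ m ω, m ≤ W m ω := by
    intro m ω
    rw [hW]
    calc m = ∑ _i ∈ Finset.Icc 1 m, 1 := by
            rw [Finset.sum_const, smul_eq_mul, mul_one, Nat.card_Icc]; omega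
      _ ≤ ∑ i ∈ Finset.Icc 1 m, X i ω :=
            Finset.sum_le_sum (fun i _ => hXpos i ω)
  have Wwin : ∀ (ω) (r : ℕ),
      (∀ j : Fin v2.length, X (r + 1 + j) ω = v2.get j) →
      W (r + v2.length) ω = W r ω + v2.sum := by
    intro ω r hwin
    rw [Wioc, Wioc, ← Finset.sum_Ioc_consecutive _ (Nat.zero_le r) (Nat.le_add_right r _)]
    congr 1
    rw [sum_Ioc_shift]
    rw [← list_sum_getD v2]
    refine Finset.sum_congr rfl (fun j hj => ?_)
    have hj' : j < v2.length := Finset.mem_range.mp hj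
    have := hwin ⟨j, hj'⟩
    rw [List.getD_eq_getElem v2 0 hj']
    exact this
  have Wwin1 : ∀ (ω) (r : ℕ),
      (∀ j : Fin v1.length, X (r + 1 + j) ω = v1.get j) →
      W (r + v1.length) ω = W r ω + v1.sum := by
    intro ω r hwin
    rw [Wioc, Wioc, ← Finset.sum_Ioc_consecutive _ (Nat.zero_le r) (Nat.le_add_right r _)]
    congr 1
    rw [sum_Ioc_shift]
    rw [← list_sum_getD v1]
    refine Finset.sum_congr rfl (fun j hj => ?_)
    have hj' : j < v1.length := Finset.mem_range.mp hj
    have := hwin ⟨j, hj'⟩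
    rw [List.getD_eq_getElem v1 0 hj']
    exact this
  have W0 : ∀ ω, W 0 ω = 0 := by
    intro ω; rw [hW]; simp
  -- the prefix event
  set A : Set Ω := {ω | ∀ j : Fin v1.length, X (j + 1) ω = v1.get j} with hA_def
  have measA : MeasurableSet A := by
    have : A = ⋂ j : Fin v1.length, X (j + 1) ⁻¹' {v1.get j} := by
      ext ω; simp [hA_def, Set.mem_iInter]
    rw [this]
    exact MeasurableSet.iInter (fun j => hX _ (measurableSet_singleton _))
  have WA : ∀ ω, ω ∈ A → W v1.length ω = v1.sum := by
    intro ω hA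
    have h0 : ∀ j : Fin v1.length, X (0 + 1 + j) ω = v1.get j := by
      intro j
      have := hA j
      rw [show (0 : ℕ) + 1 + (j : ℕ) = (j : ℕ) + 1 by omega]
      exact this
    have := Wwin1 ω 0 h0
    rwa [W0, zero_add, zero_add] at this
  -- the D and G families
  set D : ℕ → Set Ω := fun r =>
    A ∩ {ω | ∀ j : Fin v2.length, X (r + 1 + j) ω = v2.get j}
      ∩ {ω | W r ω + v2.sum ≤ n - b ∧ n - b < W r ω + v2.sum + X (r + v2.length + 1) ω}
    with hD_def
  set G : ℕ → ℕ → Set Ω := fun r u =>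
    A ∩ W r ⁻¹' {u}
      ∩ {ω | u + v2.sum ≤ n - b ∧ n - b < u + v2.sum + X (r + 1) ω} with hG_def
  have measG : ∀ r u, MeasurableSet (G r u) := by
    intro r u
    refine (measA.inter ?_).inter ?_
    · have : Measurable (W r) := by
        have : W r = fun ω => ∑ i ∈ Finset.Icc 1 r, X i ω := funext (hW r)
        rw [this]
        exact Finset.measurable_sum _ (fun i _ => hX i)
      exact this (measurableSet_singleton u)
    · by_cases hc : u + v2.sum ≤ n - b
      · have : {ω : Ω | u + v2.sum ≤ n - b ∧ n - b < u + v2.sum + X (r + 1) ω}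
            = X (r + 1) ⁻¹' {x | n - b < u + v2.sum + x} := by
          ext ω; simp [hc]
        rw [this]
        exact hX _ (meas_of_ctble _)
      · have : {ω : Ω | u + v2.sum ≤ n - b ∧ n - b < u + v2.sum + X (r + 1) ω} = ∅ := by
          ext ω; simp [hc]
        rw [this]
        exact MeasurableSet.empty
  have measD : ∀ r, MeasurableSet (D r) := by
    intro r
    have mW : Measurable (W r) := by
      have : W r = fun ω => ∑ i ∈ Finset.Icc 1 r, X i ω := funext (hW r)
      rw [this]
      exact Finset.measurable_sum _ (fun i _ => hX i)
    refine (measA.inter ?_).inter ?_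
    · have : {ω : Ω | ∀ j : Fin v2.length, X (r + 1 + j) ω = v2.get j}
          = ⋂ j : Fin v2.length, X (r + 1 + j) ⁻¹' {v2.get j} := by
        ext ω; simp [Set.mem_iInter]
      rw [this]
      exact MeasurableSet.iInter (fun j => hX _ (measurableSet_singleton _))
    · have : {ω : Ω | W r ω + v2.sum ≤ n - b ∧ n - b < W r ω + v2.sum + X (r + v2.length + 1) ω}
          = (fun ω => (W r ω, X (r + v2.length + 1) ω)) ⁻¹'
              {q : ℕ × ℕ | q.1 + v2.sum ≤ n - b ∧ n - b < q.1 + v2.sum + q.2} := by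
        ext ω; simp
      rw [this]
      exact (mW.prodMk (hX _)) (meas_of_ctble _)
  -- window probability equals Y-prefix probability
  have winprob : ∀ r : ℕ,
      μ {ω | ∀ j : Fin v2.length, X (r + 1 + j) ω = v2.get j}
        = μ {ω | ∀ j : Fin v2.length, Y (j + 1) ω = v2.get j} := by
    intro r
    have hinj1 : Function.Injective (fun j : Fin v2.length => (Sum.inl (r + 1 + j) : ℕ ⊕ ℕ)) := by
      intro a b h
      have := Sum.inl.inj h
      exact Fin.ext (by omega)
    have hinj2 : Function.Injective (fun j : Fin v2.length => (Sum.inr ((j : ℕ) + 1) : ℕ ⊕ ℕ)) := by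
      intro a b h
      have := Sum.inr.inj h
      exact Fin.ext (by omega)
    have e1 : {ω | ∀ j : Fin v2.length, X (r + 1 + j) ω = v2.get j}
        = {ω | ∀ j : Fin v2.length, Sum.elim X Y (Sum.inl (r + 1 + j)) ω = v2.get j} := rfl
    have e2 : {ω | ∀ j : Fin v2.length, Y (j + 1) ω = v2.get j}
        = {ω | ∀ j : Fin v2.length, Sum.elim X Y (Sum.inr ((j : ℕ) + 1)) ω = v2.get j} := rfl
    rw [e1, e2, iprod_prob hindep v2.length _ hinj1 (fun j => v2.get j),
      iprod_prob hindep v2.length _ hinj2 (fun j => v2.get j)]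
    refine Finset.prod_congr rfl (fun j _ => ?_)
    rw [(hident (Sum.inl (r + 1 + j))).measure_mem_eq (meas_of_ctble _),
      (hident (Sum.inr ((j : ℕ) + 1))).measure_mem_eq (meas_of_ctble _)]
  -- the per-(r,u) factorization
  have hstep : ∀ r u, v1.length + 1 ≤ r →
      μ (D r ∩ W r ⁻¹' {u})
        = μ (G r u) * μ {ω | ∀ j : Fin v2.length, Y (j + 1) ω = v2.get j} := by
    intro r u hr
    by_cases hc : u + v2.sum ≤ n - b
    · -- nontrivial case
      set AW : Set Ω := A ∩ W r ⁻¹' {u} with hAW_def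
      set sbig : Set ℕ := {x | n - b < u + v2.sum + x} with hsbig_def
      set Win : Set Ω := {ω | ∀ j : Fin v2.length, X (r + 1 + j) ω = v2.get j} with hWin_def
      have e1 : D r ∩ W r ⁻¹' {u} = (AW ∩ X (r + v2.length + 1) ⁻¹' sbig) ∩ Win := by
        ext ω
        simp only [hD_def, hAW_def, hsbig_def, hWin_def, Set.mem_inter_iff, Set.mem_preimage,
          Set.mem_singleton_iff, Set.mem_setOf_eq]
        constructor
        · rintro ⟨⟨⟨h1, h2⟩, h3, h4⟩, h5⟩
          rw [h5] at h4
          exact ⟨⟨⟨h1, h5⟩, h4⟩, h2⟩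
        · rintro ⟨⟨⟨h1, h5⟩, h4⟩, h2⟩
          rw [← h5] at hc h4
          exact ⟨⟨⟨h1, h2⟩, hc, h4⟩, by rw [h5]⟩
      -- 1) split off the window
      have S1 : Finset (ℕ ⊕ ℕ) :=
        (Finset.range (r + 1)).image Sum.inl ∪ {Sum.inl (r + v2.length + 1)}
      have split1 : μ ((AW ∩ X (r + v2.length + 1) ⁻¹' sbig) ∩ Win)
          = μ (AW ∩ X (r + v2.length + 1) ⁻¹' sbig) * μ Win := by
        refine blocks_indep hf hindep
          ((Finset.range (r + 1)).image Sum.inl ∪ {Sum.inl (r + v2.length + 1)})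
          ((Finset.range v2.length).image (fun j => Sum.inl (r + 1 + j)))
          ?_ ?_ ?_
        · rw [Finset.disjoint_left]
          intro i hi hi'
          simp only [Finset.mem_union, Finset.mem_image, Finset.mem_range,
            Finset.mem_singleton] at hi hi'
          obtain ⟨j, hj, rfl⟩ := hi'
          rcases hi with ⟨m, hm, hmi⟩ | hmi
          · have := Sum.inl.inj hmi; omega
          · have := Sum.inl.inj hmi; omega
        · intro ω ω' hag hω
          have hagX : ∀ m, m < r + 1 → X m ω = X m ω' := by
            intro m hm
            exact hag (Sum.inl m) (Finset.mem_union_left _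
              (Finset.mem_image.mpr ⟨m, Finset.mem_range.mpr hm, rfl⟩))
          have hagX2 : X (r + v2.length + 1) ω = X (r + v2.length + 1) ω' :=
            hag (Sum.inl (r + v2.length + 1))
              (Finset.mem_union_right _ (Finset.mem_singleton_self _))
          obtain ⟨⟨h1, h2⟩, h3⟩ := hω
          refine ⟨⟨?_, ?_⟩, ?_⟩
          · intro j
            rw [← hagX ((j : ℕ) + 1) (by have := j.isLt; omega)]
            exact h1 j
          · simp only [Set.mem_preimage, Set.mem_singleton_iff] at h2 ⊢
            rw [hW] at h2 ⊢
            rw [← Finset.sum_congr rfl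
              (fun i hi => hagX i (by have := (Finset.mem_Icc.mp hi).2; omega))]
            exact h2
          · simp only [Set.mem_preimage] at h3 ⊢
            rwa [← hagX2]
        · intro ω ω' hag hω
          intro j
          have h' : X (r + 1 + (j : ℕ)) ω = X (r + 1 + (j : ℕ)) ω' :=
            hag (Sum.inl (r + 1 + j)) (Finset.mem_image.mpr
              ⟨j, Finset.mem_range.mpr j.isLt, rfl⟩)
          rw [← h']
          exact hω j
      -- 2) split off the last gap and exchange it
      have split2 : μ (AW ∩ X (r + v2.length + 1) ⁻¹' sbig)
          = μ AW * μ (X (r + v2.length + 1) ⁻¹' sbig) := by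
        refine blocks_indep hf hindep
          ((Finset.range (r + 1)).image Sum.inl) {Sum.inl (r + v2.length + 1)} ?_ ?_ ?_
        · rw [Finset.disjoint_left]
          intro i hi hi'
          simp only [Finset.mem_image, Finset.mem_range, Finset.mem_singleton] at hi hi'
          obtain ⟨m, hm, rfl⟩ := hi
          have := Sum.inl.inj hi'; omega
        · intro ω ω' hag hω
          have hagX : ∀ m, m < r + 1 → X m ω = X m ω' := by
            intro m hm
            exact hag (Sum.inl m) (Finset.mem_image.mpr ⟨m, Finset.mem_range.mpr hm, rfl⟩)
          obtain ⟨h1, h2⟩ := hω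
          refine ⟨?_, ?_⟩
          · intro j
            rw [← hagX ((j : ℕ) + 1) (by have := j.isLt; omega)]
            exact h1 j
          · simp only [Set.mem_preimage, Set.mem_singleton_iff] at h2 ⊢
            rw [hW] at h2 ⊢
            rw [← Finset.sum_congr rfl
              (fun i hi => hagX i (by have := (Finset.mem_Icc.mp hi).2; omega))]
            exact h2
        · intro ω ω' hag hω
          simp only [Set.mem_preimage] at hω ⊢
          have h' : X (r + v2.length + 1) ω = X (r + v2.length + 1) ω' :=
            hag (Sum.inl (r + v2.length + 1)) (Finset.mem_singleton_self _)
          rwa [← h']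
      have exch : μ (X (r + v2.length + 1) ⁻¹' sbig) = μ (X (r + 1) ⁻¹' sbig) :=
        ((hident (Sum.inl (r + v2.length + 1))).measure_mem_eq (meas_of_ctble _)).trans
          ((hident (Sum.inl (r + 1))).measure_mem_eq (meas_of_ctble _)).symm
      have split3 : μ (AW ∩ X (r + 1) ⁻¹' sbig) = μ AW * μ (X (r + 1) ⁻¹' sbig) := by
        refine blocks_indep hf hindep
          ((Finset.range (r + 1)).image Sum.inl) {Sum.inl (r + 1)} ?_ ?_ ?_
        · rw [Finset.disjoint_left]
          intro i hi hi'
          simp only [Finset.mem_image, Finset.mem_range, Finset.mem_singleton] at hi hi'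
          obtain ⟨m, hm, rfl⟩ := hi
          have := Sum.inl.inj hi'; omega
        · intro ω ω' hag hω
          have hagX : ∀ m, m < r + 1 → X m ω = X m ω' := by
            intro m hm
            exact hag (Sum.inl m) (Finset.mem_image.mpr ⟨m, Finset.mem_range.mpr hm, rfl⟩)
          obtain ⟨h1, h2⟩ := hω
          refine ⟨?_, ?_⟩
          · intro j
            rw [← hagX ((j : ℕ) + 1) (by have := j.isLt; omega)]
            exact h1 j
          · simp only [Set.mem_preimage, Set.mem_singleton_iff] at h2 ⊢
            rw [hW] at h2 ⊢
            rw [← Finset.sum_congr rfl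
              (fun i hi => hagX i (by have := (Finset.mem_Icc.mp hi).2; omega))]
            exact h2
        · intro ω ω' hag hω
          simp only [Set.mem_preimage] at hω ⊢
          have h' : X (r + 1) ω = X (r + 1) ω' :=
            hag (Sum.inl (r + 1)) (Finset.mem_singleton_self _)
          rwa [← h']
      have eG : G r u = AW ∩ X (r + 1) ⁻¹' sbig := by
        ext ω
        simp only [hG_def, hAW_def, hsbig_def, Set.mem_inter_iff, Set.mem_preimage,
          Set.mem_singleton_iff, Set.mem_setOf_eq]
        constructor
        · rintro ⟨⟨h1, h2⟩, _, h4⟩; exact ⟨⟨h1, h2⟩, h4⟩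
        · rintro ⟨⟨h1, h2⟩, h4⟩; exact ⟨⟨h1, h2⟩, hc, h4⟩
      rw [e1, split1, split2, exch, ← split3, ← eG, winprob r]
    · -- degenerate case: both sides vanish
      have e0 : D r ∩ W r ⁻¹' {u} = ∅ := by
        ext ω
        simp only [hD_def, Set.mem_inter_iff, Set.mem_preimage, Set.mem_singleton_iff,
          Set.mem_setOf_eq, Set.mem_empty_iff_false, iff_false]
        rintro ⟨⟨⟨h1, h2⟩, h3, h4⟩, h5⟩
        rw [h5] at h3
        exact hc h3
      have e0' : G r u = ∅ := by
        ext ω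
        simp only [hG_def, Set.mem_inter_iff, Set.mem_preimage, Set.mem_singleton_iff,
          Set.mem_setOf_eq, Set.mem_empty_iff_false, iff_false]
        rintro ⟨⟨_, _⟩, h3, _⟩
        exact hc h3
      rw [e0, e0', measure_empty, zero_mul]
  -- decomposition of D r over the values of W r
  have hDr : ∀ r, v1.length + 1 ≤ r →
      μ (D r) = (∑' u, μ (G r u)) * μ {ω | ∀ j : Fin v2.length, Y (j + 1) ω = v2.get j} := by
    intro r hr
    have hdec : D r = ⋃ u : ℕ, (D r ∩ W r ⁻¹' {u}) := by
      ext ω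
      simp only [Set.mem_iUnion, Set.mem_inter_iff, Set.mem_preimage, Set.mem_singleton_iff]
      constructor
      · intro h; exact ⟨W r ω, h, rfl⟩
      · rintro ⟨u, h, _⟩; exact h
    have hdisj : Pairwise (Function.onFun Disjoint (fun u => D r ∩ W r ⁻¹' {u})) := by
      intro u u' huu'
      refine Set.disjoint_left.mpr ?_
      rintro ω ⟨_, h1⟩ ⟨_, h2⟩
      simp only [Set.mem_preimage, Set.mem_singleton_iff] at h1 h2
      exact huu' (h1 ▸ h2 ▸ rfl)
    calc μ (D r) = ∑' u, μ (D r ∩ W r ⁻¹' {u}) := by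
          conv_lhs => rw [hdec]
          exact measure_iUnion hdisj (fun u => (measD r).inter
            (by
              have mW : Measurable (W r) := by
                have : W r = fun ω => ∑ i ∈ Finset.Icc 1 r, X i ω := funext (hW r)
                rw [this]
                exact Finset.measurable_sum _ (fun i _ => hX i)
              exact mW (measurableSet_singleton u)))
      _ = ∑' u, μ (G r u) * μ {ω | ∀ j : Fin v2.length, Y (j + 1) ω = v2.get j} :=
          tsum_congr (fun u => hstep r u hr)
      _ = (∑' u, μ (G r u)) * μ {ω | ∀ j : Fin v2.length, Y (j + 1) ω = v2.get j} :=
          ENNReal.tsum_mul_right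
  -- disjointness of the G family
  have Gdisj : ∀ (r u r' u'), r < r' → Disjoint (G r u) (G r' u') := by
    intro r u r' u' hrr'
    refine Set.disjoint_left.mpr ?_
    rintro ω ⟨⟨_, h2⟩, h3, h4⟩ ⟨⟨_, h2'⟩, h3', h4'⟩
    simp only [Set.mem_preimage, Set.mem_singleton_iff] at h2 h2'
    -- u' < u + X (r+1) ω = W (r+1) ω ≤ W r' ω = u'
    have hW1 : W (r + 1) ω = u + X (r + 1) ω := by rw [Wsucc, h2]
    have hle : W (r + 1) ω ≤ W r' ω := Wmono ω hrr'
    omega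
  have GdisjP : Pairwise (Function.onFun Disjoint
      (fun q : ℕ × ℕ => G (v1.length + 1 + q.1) q.2)) := by
    intro q q' hqq'
    rcases Nat.lt_trichotomy q.1 q'.1 with h | h | h
    · exact Gdisj _ _ _ _ (by omega)
    · -- same r, different u
      have hu : q.2 ≠ q'.2 := by
        intro h2
        exact hqq' (Prod.ext h h2)
      refine Set.disjoint_left.mpr ?_
      rintro ω ⟨⟨_, h2⟩, _⟩ ⟨⟨_, h2'⟩, _⟩
      simp only [Set.mem_preimage, Set.mem_singleton_iff] at h2 h2'
      rw [h] at h2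
      exact hu (h2 ▸ h2' ▸ rfl)
    · exact (Gdisj _ _ _ _ (by omega)).symm
  -- containment of the event in the union of the D's
  have hcontain : ({ω | (∀ j : Fin v1.length, X (j + 1) ω = v1.get j) ∧
          (∀ j : Fin v2.length, X (T ω - v2.length + 1 + j) ω = v2.get j)}
        ∩ {ω | ∀ i ∈ Finset.Icc 1 n, (X i ω : ℝ) ≤ (n : ℝ) / M})
      ⊆ ⋃ k : ℕ, D (v1.length + 1 + k) := by
    rintro ω ⟨⟨hA, hwin⟩, hL⟩
    obtain ⟨hT1, hT2⟩ := hT ω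
    simp only [Set.mem_setOf_eq] at hA hwin hL
    -- v2.sum ≤ n - b
    have hS2R : (v2.sum : ℝ) + b ≤ n := by linarith
    have hS2n : v2.sum + b ≤ n := by exact_mod_cast hS2R
    have hS2nb : v2.sum ≤ n - b := by omega
    -- T ω ≥ v2.length
    have ht2 : v2.length ≤ T ω := by
      by_contra hcon
      push_neg at hcon
      have h0 : T ω - v2.length = 0 := by omega
      have hwin0 : ∀ j : Fin v2.length, X (0 + 1 + j) ω = v2.get j := by
        intro j
        have := hwin j
        rwa [h0] at this
      have hWl2 := Wwin ω 0 hwin0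
      rw [W0, zero_add, zero_add] at hWl2
      have := hT2 v2.length (by rw [hWl2]; exact hS2nb)
      omega
    have hrt : (T ω - v2.length) + v2.length = T ω := by omega
    -- the window sum identity
    have hwin' : ∀ j : Fin v2.length, X ((T ω - v2.length) + 1 + j) ω = v2.get j := hwin
    have hWsplit : W (T ω) ω = W (T ω - v2.length) ω + v2.sum := by
      have := Wwin ω (T ω - v2.length) hwin'
      rwa [hrt] at this
    -- n - b < W (T ω + 1) ω
    have hWt1 : n - b < W (T ω + 1) ω := by
      by_contra hcon
      push_neg at hcon
      have := hT2 (T ω + 1) hcon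
      omega
    -- real lower bound on W (T ω) ω
    have hWtR : ((n : ℝ) - b) - (n : ℝ) / M < (W (T ω) ω : ℝ) := by
      rcases le_or_gt (T ω + 1) n with hcase | hcase
      · have hXt1 : (X (T ω + 1) ω : ℝ) ≤ (n : ℝ) / M :=
          hL (T ω + 1) (Finset.mem_Icc.mpr ⟨by omega, hcase⟩)
        have h1 : W (T ω + 1) ω = W (T ω) ω + X (T ω + 1) ω := Wsucc _ ω
        have h2 : ((n : ℝ) - b) < (W (T ω + 1) ω : ℝ) := by
          have : ((n - b : ℕ) : ℝ) < ((W (T ω + 1) ω : ℕ) : ℝ) := by exact_mod_cast hWt1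
          rwa [hnbR] at this
        rw [h1] at h2
        push_cast at h2
        linarith
      · have h5 := Wge (T ω) ω
        have h6 : W (T ω) ω = n := by omega
      -- T ω ≥ n, W (T ω) ω ≥ T ω ≥ n, and W (T ω) ω ≤ n - b ≤ n
        rw [h6]
        have : (0 : ℝ) < (n : ℝ) / M := by positivity
        have hbpos : (0 : ℝ) ≤ (b : ℝ) := Nat.cast_nonneg b
        linarith
    -- v1.length + 1 ≤ T ω - v2.length
    have hl1r : v1.length + 1 ≤ T ω - v2.length := by
      have hWl1 : W v1.length ω = v1.sum := WA ω hA
      have hnM : (n : ℝ) / M ≤ (n : ℝ) / 100 :=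
        div_le_div_of_nonneg_left (le_of_lt hnpos) (by norm_num) hM
      have hsplitR : (W (T ω) ω : ℝ) = (W (T ω - v2.length) ω : ℝ) + (v2.sum : ℝ) := by
        exact_mod_cast hWsplit
      have hWrR : (4 : ℝ) * n / 9 < (W (T ω - v2.length) ω : ℝ) := by
        -- W r = W t - S2 > (n - b - n/M) - 4n/9 ≥ 4n/9
        have : ((n : ℝ) - b) - (n : ℝ) / M - (v2.sum : ℝ) < (W (T ω - v2.length) ω : ℝ) := by
          linarith
        -- n - b - n/M - S2 ≥ n - n/100 - n/100 - 4n/9 > 4n/9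
        nlinarith [hnpos]
      have hlt : W v1.length ω < W (T ω - v2.length) ω := by
        have : (v1.sum : ℝ) < (W (T ω - v2.length) ω : ℝ) := lt_of_le_of_lt h149 hWrR
        rw [← hWl1] at this
        exact_mod_cast this
      have : v1.length < T ω - v2.length := by
        by_contra hcon
        push_neg at hcon
        exact absurd (Wmono ω hcon) (not_le.mpr hlt)
      omega
    -- conclude membership
    refine Set.mem_iUnion.mpr ⟨(T ω - v2.length) - (v1.length + 1), ?_⟩
    have hidx : v1.length + 1 + ((T ω - v2.length) - (v1.length + 1)) = T ω - v2.length := by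
      omega
    rw [hidx]
    refine ⟨⟨hA, hwin'⟩, ?_, ?_⟩
    · rw [← hWsplit]; exact hT1
    · have hWt1' : W (T ω + 1) ω
          = W (T ω - v2.length) ω + v2.sum + X ((T ω - v2.length) + v2.length + 1) ω := by
        rw [Wsucc, hWsplit, hrt]
      rw [← hWt1']
      exact hWt1
  -- putting everything together
  calc μ ({ω | (∀ j : Fin v1.length, X (j + 1) ω = v1.get j) ∧
          (∀ j : Fin v2.length, X (T ω - v2.length + 1 + j) ω = v2.get j)}
        ∩ {ω | ∀ i ∈ Finset.Icc 1 n, (X i ω : ℝ) ≤ (n : ℝ) / M})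
      ≤ μ (⋃ k : ℕ, D (v1.length + 1 + k)) := measure_mono hcontain
    _ ≤ ∑' k : ℕ, μ (D (v1.length + 1 + k)) := measure_iUnion_le _
    _ = ∑' k : ℕ, (∑' u, μ (G (v1.length + 1 + k) u))
          * μ {ω | ∀ j : Fin v2.length, Y (j + 1) ω = v2.get j} :=
        tsum_congr (fun k => hDr _ (by omega))
    _ = (∑' k : ℕ, ∑' u, μ (G (v1.length + 1 + k) u))
          * μ {ω | ∀ j : Fin v2.length, Y (j + 1) ω = v2.get j} := ENNReal.tsum_mul_right
    _ = (∑' q : ℕ × ℕ, μ (G (v1.length + 1 + q.1) q.2))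
          * μ {ω | ∀ j : Fin v2.length, Y (j + 1) ω = v2.get j} := by
        rw [ENNReal.tsum_prod']
    _ = μ (⋃ q : ℕ × ℕ, G (v1.length + 1 + q.1) q.2)
          * μ {ω | ∀ j : Fin v2.length, Y (j + 1) ω = v2.get j} := by
        rw [measure_iUnion GdisjP (fun q => measG _ _)]
    _ ≤ μ A * μ {ω | ∀ j : Fin v2.length, Y (j + 1) ω = v2.get j} := by
        refine mul_le_mul_left (measure_mono ?_) _
        exact Set.iUnion_subset (fun q => fun ω h => h.1.1)

end KEY


/-- Lemma 2.2 of the paper: there is an `M₀ > 0` such that for all `M ≥ M₀`,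
any i.i.d. positive integer gap sequence `X` with an independent copy `Y`,
any `n`, any `b ≤ n/M`, and any set `K` of pairs of vectors `(v₁, v₂)` of
positive integers with `n/3 ≤ S(v₁) ≤ 4n/9`, `S(v₁') < n/3`,
`n/3 ≤ S(v₂) ≤ 4n/9`, `S(v₂') < n/3`, the probability of the union over
`(v₁,v₂) ∈ K` of `{X_[1,l(v₁)] = v₁, X_[T_{n-b}-l(v₂)+1, T_{n-b}] = v₂}`
intersected with `Lₙ` is at most
`∑_{(v₁,v₂) ∈ K} P(X_[1,l(v₁)] = v₁) P(Y_[1,l(v₂)] = v₂)`. -/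
theorem stmt8 :
    ∃ M₀ : ℝ, 0 < M₀ ∧ ∀ M : ℝ, M₀ ≤ M →
    ∀ (Ω : Type) [MeasurableSpace Ω] (μ : Measure Ω), IsProbabilityMeasure μ →
    ∀ (X Y : ℕ → Ω → ℕ),
      (∀ i, Measurable (X i)) → (∀ i, Measurable (Y i)) →
      (∀ i ω, 0 < X i ω) → (∀ i ω, 0 < Y i ω) →
      iIndepFun (Sum.elim X Y) μ →
      (∀ s : ℕ ⊕ ℕ, IdentDistrib (Sum.elim X Y s) (X 1) μ μ) →
    ∀ (W : ℕ → Ω → ℕ), (∀ m ω, W m ω = ∑ i ∈ Finset.Icc 1 m, X i ω) →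
    ∀ n : ℕ, 1 ≤ n →
    ∀ b : ℕ, (b : ℝ) ≤ (n : ℝ) / M →
    ∀ (T : Ω → ℕ),
      (∀ ω, W (T ω) ω ≤ n - b ∧ ∀ i, W i ω ≤ n - b → i ≤ T ω) →
    ∀ K : Set (List ℕ × List ℕ),
      (∀ p ∈ K, (∀ x ∈ p.1, 0 < x) ∧ (∀ x ∈ p.2, 0 < x) ∧
        (n : ℝ) / 3 ≤ (p.1.sum : ℝ) ∧ (p.1.sum : ℝ) ≤ 4 * (n : ℝ) / 9 ∧
        (p.1.dropLast.sum : ℝ) < (n : ℝ) / 3 ∧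
        (n : ℝ) / 3 ≤ (p.2.sum : ℝ) ∧ (p.2.sum : ℝ) ≤ 4 * (n : ℝ) / 9 ∧
        (p.2.dropLast.sum : ℝ) < (n : ℝ) / 3) →
    μ ((⋃ p ∈ K, {ω | (∀ j : Fin p.1.length, X (j + 1) ω = p.1.get j) ∧
          (∀ j : Fin p.2.length, X (T ω - p.2.length + 1 + j) ω = p.2.get j)})
        ∩ {ω | ∀ i ∈ Finset.Icc 1 n, (X i ω : ℝ) ≤ (n : ℝ) / M})
      ≤ ∑' p : K, μ {ω | ∀ j : Fin (p : List ℕ × List ℕ).1.length,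
            X (j + 1) ω = (p : List ℕ × List ℕ).1.get j}
          * μ {ω | ∀ j : Fin (p : List ℕ × List ℕ).2.length,
            Y (j + 1) ω = (p : List ℕ × List ℕ).2.get j} := by
  refine ⟨100, by norm_num, ?_⟩
  intro M hM Ω _ μ hprob X Y hX hY hXpos hYpos hindep hident W hW n hn b hb T hT K hK
  haveI := hprob
  rw [Set.iUnion₂_inter]
  refine le_trans (measure_biUnion_le μ (Set.to_countable K) _) ?_
  refine ENNReal.tsum_le_tsum (fun p => ?_)
  exact key hX hY hXpos hindep hident hW n hn b M hM hb T hT p.1.1 p.1.2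
    (hK p.1 p.2).2.2.2.1 (hK p.1 p.2).2.2.2.2.2.2.1
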